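/- Let X be a compact Hausdorff space, ∗ a continuous t-norm, and μ : C(X,[0,1]) → [0,1] a functional satisfying: (1) μ(1_X)=1; (2) monotonicity: φ ≤ ψ implies μ(φ) ≤ μ(ψ); (3) comonotone maxitivity: μ(φ∨ψ) = μ(φ)∨μ(ψ) for comonotone φ, ψ; (4) μ(c_X ∗ φ) = c ∗ μ(φ) for all c ∈ [0,1]. Then there exists a unique upper-semicontinuous capacity ν on X such that μ(φ) = ∫^{∨∗} φ dν for all continuous φ : X → [0,1]. Conversely, for every capacity ν the functional φ ↦ ∫^{∨∗} φ dν satisfies (1)–(4). -/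

import Mathlib

open Set

/-- A continuous triangular norm on `[0,1]`, modeled as a binary operation on `ℝ`
restricted to the unit interval. -/
structure Tnorm where
  op : ℝ → ℝ → ℝ
  mem' : ∀ a b : ℝ, a ∈ Set.Icc (0:ℝ) 1 → b ∈ Set.Icc (0:ℝ) 1 → op a b ∈ Set.Icc (0:ℝ) 1
  comm' : ∀ a b : ℝ, op a b = op b a
  assoc' : ∀ a b c : ℝ, op (op a b) c = op a (op b c)
  mono' : ∀ a b c d : ℝ, a ≤ b → c ≤ d → op a c ≤ op b d
  one_id' : ∀ a ∈ Set.Icc (0:ℝ) 1, op a 1 = a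
  cont' : Continuous fun p : ℝ × ℝ => op p.1 p.2

/-- An upper-semicontinuous capacity on a topological space `X`. -/
structure Capacity (X : Type*) [TopologicalSpace X] where
  toFun : Set X → ℝ
  nonneg' : ∀ A : Set X, 0 ≤ toFun A
  le_one' : ∀ A : Set X, toFun A ≤ 1
  empty' : toFun (∅ : Set X) = 0
  univ' : toFun (Set.univ : Set X) = 1
  mono' : ∀ A B : Set X, A ⊆ B → toFun A ≤ toFun B
  usc' : ∀ F : Set X, IsClosed F → ∀ a : ℝ, toFun F < a →
    ∃ O : Set X, IsOpen O ∧ F ⊆ O ∧ ∀ B : Set X, B ⊆ O → IsCompact B → toFun B < a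

/-- Two functions are comonotone (equiordered). -/
def Comonotone {X : Type*} (φ ψ : X → ℝ) : Prop :=
  ∀ x₁ x₂ : X, 0 ≤ (φ x₁ - φ x₂) * (ψ x₁ - ψ x₂)

/-- The t-normed integral `∫^{∨∗} f dν = sup { ν(f⁻¹[t,1]) ∗ t : t ∈ [0,1] }`. -/
noncomputable def tInt {X : Type*} [TopologicalSpace X] (T : Tnorm) (ν : Capacity X)
    (f : X → ℝ) : ℝ :=
  sSup ((fun t : ℝ => T.op (ν.toFun (f ⁻¹' Set.Icc t 1)) t) '' Set.Icc (0:ℝ) 1)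

namespace Tnorm
variable (T : Tnorm)

lemma one_op {a : ℝ} (ha : a ∈ Set.Icc (0:ℝ) 1) : T.op 1 a = a := by
  rw [T.comm']; exact T.one_id' a ha

lemma op_zero {a : ℝ} (ha : a ∈ Set.Icc (0:ℝ) 1) : T.op a 0 = 0 := by
  have h1 : T.op a 0 ≤ T.op 1 0 := T.mono' _ _ _ _ ha.2 le_rfl
  have h2 : T.op 1 0 = 0 := T.one_op (by simp)
  have h3 := (T.mem' a 0 ha (by simp)).1
  linarith
lemma zero_op {a : ℝ} (ha : a ∈ Set.Icc (0:ℝ) 1) : T.op 0 a = 0 := by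
  rw [T.comm']; exact T.op_zero ha
lemma op_le_left {a b : ℝ} (ha : a ∈ Set.Icc (0:ℝ) 1) (hb : b ∈ Set.Icc (0:ℝ) 1) :
    T.op a b ≤ a := by
  have := T.mono' a a b 1 le_rfl hb.2
  rwa [T.one_id' a ha] at this
lemma op_le_right {a b : ℝ} (ha : a ∈ Set.Icc (0:ℝ) 1) (hb : b ∈ Set.Icc (0:ℝ) 1) :
    T.op a b ≤ b := by rw [T.comm']; exact T.op_le_left hb ha

/-- Uniform continuity of the t-norm on the unit square. -/
lemma unif : ∀ ε > (0:ℝ), ∃ δ > (0:ℝ), ∀ a ∈ Set.Icc (0:ℝ) 1, ∀ b ∈ Set.Icc (0:ℝ) 1,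
    ∀ a' ∈ Set.Icc (0:ℝ) 1, ∀ b' ∈ Set.Icc (0:ℝ) 1,
    |a - a'| < δ → |b - b'| < δ → |T.op a b - T.op a' b'| < ε := by
  have hc : IsCompact (Set.Icc (0:ℝ) 1 ×ˢ Set.Icc (0:ℝ) 1) :=
    (isCompact_Icc).prod (isCompact_Icc)
  have huc : UniformContinuousOn (fun p : ℝ × ℝ => T.op p.1 p.2)
      (Set.Icc (0:ℝ) 1 ×ˢ Set.Icc (0:ℝ) 1) :=
    hc.uniformContinuousOn_of_continuous (T.cont'.continuousOn)
  intro ε hε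
  rw [Metric.uniformContinuousOn_iff] at huc
  obtain ⟨δ, hδ, h⟩ := huc ε hε
  refine ⟨δ, hδ, fun a ha b hb a' ha' b' hb' h1 h2 => ?_⟩
  have := h (x := (a,b)) (y := (a',b')) ⟨ha, hb⟩ ⟨ha', hb'⟩ ?_
  · simpa [Real.dist_eq] using this
  · simp only [Prod.dist_eq, Real.dist_eq]
    exact max_lt h1 h2

end Tnorm

section
variable {X : Type*} [TopologicalSpace X] (μ : (X → ℝ) → ℝ)

/-- candidates witnessing the capacity of `A` -/
def IsCand (A : Set X) (φ : X → ℝ) : Prop :=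
  Continuous φ ∧ (∀ x, φ x ∈ Icc (0:ℝ) 1) ∧ ∀ x ∈ A, φ x = 1

noncomputable def nuF (A : Set X) : ℝ := sInf (μ '' {φ | IsCand A φ})

lemma isCand_one (A : Set X) : IsCand A (fun _ => (1:ℝ)) :=
  ⟨continuous_const, fun _ => by norm_num, fun _ _ => rfl⟩

variable {μ}
variable (hmono : ∀ φ ψ : X → ℝ, Continuous φ → Continuous ψ →
        (∀ x, φ x ∈ Set.Icc (0:ℝ) 1) → (∀ x, ψ x ∈ Set.Icc (0:ℝ) 1) →
        (∀ x, φ x ≤ ψ x) → μ φ ≤ μ ψ)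
  (hone : μ (fun _ => 1) = 1)

variable (T : Tnorm)
  (hhom : ∀ c ∈ Set.Icc (0:ℝ) 1, ∀ φ : X → ℝ, Continuous φ → (∀ x, φ x ∈ Set.Icc (0:ℝ) 1) →
        μ (fun x => T.op c (φ x)) = T.op c (μ φ))

include hone hhom in
lemma mu_zero : μ (fun _ => 0) = 0 := by
  have h := hhom 0 (by norm_num) (fun _ => 1) continuous_const (fun _ => by norm_num)
  rw [hone, T.zero_op (by norm_num)] at h
  have : (fun _ : X => T.op 0 1) = (fun _ : X => (0:ℝ)) := by
    funext x; rw [T.zero_op (by norm_num)]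
  exact h

include hmono hone hhom in
lemma mu_mem {φ : X → ℝ} (hc : Continuous φ) (hr : ∀ x, φ x ∈ Icc (0:ℝ) 1) :
    μ φ ∈ Icc (0:ℝ) 1 := by
  constructor
  · rw [← mu_zero hone T hhom]
    exact hmono _ _ continuous_const hc (fun _ => by norm_num) hr (fun x => (hr x).1)
  · rw [← hone]
    exact hmono _ _ hc continuous_const hr (fun _ => by norm_num) (fun x => (hr x).2)

include hmono hone hhom in
lemma nuF_bddBelow (A : Set X) : BddBelow (μ '' {φ | IsCand A φ}) :=
  ⟨0, fun y ⟨φ, hφ, hy⟩ => hy ▸ (mu_mem hmono hone T hhom hφ.1 hφ.2.1).1⟩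

include hmono hone hhom in
lemma nuF_le {A : Set X} {φ : X → ℝ} (h : IsCand A φ) : nuF μ A ≤ μ φ :=
  csInf_le (nuF_bddBelow hmono hone T hhom A) ⟨φ, h, rfl⟩

lemma le_nuF {A : Set X} {c : ℝ} (h : ∀ φ : X → ℝ, IsCand A φ → c ≤ μ φ) : c ≤ nuF μ A :=
  le_csInf ⟨μ _, _, isCand_one A, rfl⟩ (fun y ⟨φ, hφ, hy⟩ => hy ▸ h φ hφ)

include hmono hone hhom in
lemma nuF_mem (A : Set X) : nuF μ A ∈ Icc (0:ℝ) 1 := by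
  constructor
  · exact le_nuF fun φ hφ => (mu_mem hmono hone T hhom hφ.1 hφ.2.1).1
  · calc nuF μ A ≤ μ (fun _ => 1) := nuF_le hmono hone T hhom (isCand_one A)
      _ = 1 := hone

include hmono hone hhom in
lemma nuF_mono {A B : Set X} (h : A ⊆ B) : nuF μ A ≤ nuF μ B :=
  le_nuF fun φ hφ => nuF_le hmono hone T hhom ⟨hφ.1, hφ.2.1, fun x hx => hφ.2.2 x (h hx)⟩

include hmono hone hhom in
lemma nuF_empty : nuF μ (∅ : Set X) = 0 := by
  refine le_antisymm ?_ (nuF_mem hmono hone T hhom _).1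
  calc nuF μ (∅:Set X) ≤ μ (fun _ => 0) :=
        nuF_le hmono hone T hhom ⟨continuous_const, fun _ => by norm_num, fun x hx => hx.elim⟩
    _ = 0 := mu_zero hone T hhom

include hmono hone hhom in
lemma nuF_univ : nuF μ (univ : Set X) = 1 := by
  refine le_antisymm (nuF_mem hmono hone T hhom _).2 ?_
  refine le_nuF fun φ hφ => ?_
  have : φ = fun _ => 1 := funext fun x => hφ.2.2 x trivial
  rw [this, hone]

include hmono in
lemma mu_le_nuF {A : Set X} {ψ : X → ℝ} (hc : Continuous ψ) (hr : ∀ x, ψ x ∈ Icc (0:ℝ) 1)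
    (hs : ∀ x, ψ x ≠ 0 → x ∈ A) : μ ψ ≤ nuF μ A := by
  refine le_nuF fun φ hφ => ?_
  refine hmono _ _ hc hφ.1 hr hφ.2.1 fun x => ?_
  by_cases hx : ψ x = 0
  · rw [hx]; exact (hφ.2.1 x).1
  · rw [hφ.2.2 x (hs x hx)]; exact (hr x).2

end

section
variable {X : Type*} [TopologicalSpace X] [CompactSpace X] [T2Space X] {μ : (X → ℝ) → ℝ}
variable (hmono : ∀ φ ψ : X → ℝ, Continuous φ → Continuous ψ →
        (∀ x, φ x ∈ Set.Icc (0:ℝ) 1) → (∀ x, ψ x ∈ Set.Icc (0:ℝ) 1) →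
        (∀ x, φ x ≤ ψ x) → μ φ ≤ μ ψ)
  (hone : μ (fun _ => 1) = 1)
  (T : Tnorm)
  (hhom : ∀ c ∈ Set.Icc (0:ℝ) 1, ∀ φ : X → ℝ, Continuous φ → (∀ x, φ x ∈ Set.Icc (0:ℝ) 1) →
        μ (fun x => T.op c (φ x)) = T.op c (μ φ))

include hmono hone hhom in
lemma nuF_usc {F : Set X} (hF : IsClosed F) {a : ℝ} (ha : nuF μ F < a) :
    ∃ O : Set X, IsOpen O ∧ F ⊆ O ∧ ∀ B : Set X, B ⊆ O → IsCompact B → nuF μ B < a := by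
  have hne : (μ '' {φ | IsCand F φ}).Nonempty := ⟨μ (fun _ => 1), ⟨_, isCand_one F, rfl⟩⟩
  simp only [nuF] at ha
  obtain ⟨y, ⟨φ, hφ, rfl⟩, hya⟩ := exists_lt_of_csInf_lt hne ha
  set a' : ℝ := (μ φ + a)/2 with ha'
  have hδ : (0:ℝ) < a - a' := by simp only [ha']; linarith
  have hφa' : μ φ < a' := by simp only [ha']; linarith
  obtain ⟨δ', hδ', hu⟩ := T.unif (a - a') hδ
  set t₀ : ℝ := max 0 (1 - δ'/2) with ht₀
  have ht₀m : t₀ ∈ Set.Icc (0:ℝ) 1 := ⟨le_max_left _ _, by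
    apply max_le (by norm_num); linarith⟩
  have ht₀1 : |t₀ - 1| < δ' := by
    rw [abs_sub_lt_iff]
    constructor
    · linarith [ht₀m.2]
    · have : 1 - δ'/2 ≤ t₀ := le_max_right _ _
      linarith
  have ht₀lt : t₀ < 1 := by
    rcases le_or_gt (1 - δ'/2) 0 with h | h
    · simp only [ht₀]; rw [max_eq_left h]; norm_num
    · simp only [ht₀]; rw [max_eq_right h.le]; linarith
  refine ⟨{x | t₀ < φ x}, isOpen_lt continuous_const hφ.1, fun x hx => ?_, ?_⟩
  · simp only [Set.mem_setOf_eq, hφ.2.2 x hx]; exact ht₀lt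
  · intro B hBO hBc
    have hBcl : IsClosed B := hBc.isClosed
    obtain ⟨ψ, hψ0, hψ1, hψm⟩ := exists_continuous_zero_one_of_isClosed
      (isOpen_lt continuous_const hφ.1).isClosed_compl hBcl
      (by
        rw [Set.disjoint_compl_left_iff_subset]; exact hBO)
    have hψr : ∀ x, ψ x ∈ Set.Icc (0:ℝ) 1 := hψm
    have hcand : IsCand B ψ := ⟨ψ.continuous, hψr, fun x hx => hψ1 hx⟩
    have hle1 : T.op t₀ (nuF μ B) ≤ T.op t₀ (μ ψ) :=
      T.mono' _ _ _ _ le_rfl (nuF_le hmono hone T hhom hcand)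
    have hchi : μ (fun x => T.op t₀ (ψ x)) ≤ μ φ := by
      refine hmono _ _ (T.cont'.comp (continuous_const.prodMk ψ.continuous)) hφ.1
        (fun x => T.mem' _ _ ht₀m (hψr x)) hφ.2.1 (fun x => ?_)
      by_cases hx : ψ x = 0
      · rw [hx, T.op_zero ht₀m]; exact (hφ.2.1 x).1
      · have hxO : x ∈ {x | t₀ < φ x} := by
          by_contra hxo
          exact hx (hψ0 hxo)
        calc T.op t₀ (ψ x) ≤ t₀ := T.op_le_left ht₀m (hψr x)
          _ ≤ φ x := le_of_lt hxO
    have hle2 : T.op t₀ (μ ψ) = μ (fun x => T.op t₀ (ψ x)) :=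
      (hhom t₀ ht₀m ψ ψ.continuous hψr).symm
    have hkey : T.op t₀ (nuF μ B) < a' := by
      calc T.op t₀ (nuF μ B) ≤ μ (fun x => T.op t₀ (ψ x)) := hle2 ▸ hle1
        _ ≤ μ φ := hchi
        _ < a' := hφa'
    have hnB := nuF_mem hmono hone T hhom B
    have hclose : |T.op t₀ (nuF μ B) - T.op 1 (nuF μ B)| < a - a' := by
      refine hu t₀ ht₀m (nuF μ B) hnB 1 (by norm_num) (nuF μ B) hnB ht₀1 (by simpa using hδ')
    rw [T.one_op hnB] at hclose
    have := abs_lt.mp hclose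
    linarith [this.1, this.2, hkey]
end

section tIntLemmas
variable {X : Type*} [TopologicalSpace X] (T : Tnorm) (ν : Capacity X) (f : X → ℝ)

lemma nu_mem (A : Set X) : ν.toFun A ∈ Set.Icc (0:ℝ) 1 := ⟨ν.nonneg' A, ν.le_one' A⟩

lemma tInt_set_nonempty :
    ((fun t : ℝ => T.op (ν.toFun (f ⁻¹' Set.Icc t 1)) t) '' Set.Icc (0:ℝ) 1).Nonempty :=
  ⟨_, ⟨0, by norm_num, rfl⟩⟩

lemma tInt_set_bddAbove :
    BddAbove ((fun t : ℝ => T.op (ν.toFun (f ⁻¹' Set.Icc t 1)) t) '' Set.Icc (0:ℝ) 1) := by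
  refine ⟨1, fun y ⟨t, ht, hy⟩ => ?_⟩
  exact hy ▸ (T.mem' _ _ (nu_mem ν _) ht).2

lemma le_tInt' {t : ℝ} (ht : t ∈ Set.Icc (0:ℝ) 1) :
    T.op (ν.toFun (f ⁻¹' Set.Icc t 1)) t ≤ tInt T ν f :=
  le_csSup (tInt_set_bddAbove T ν f) ⟨t, ht, rfl⟩

lemma tInt_le {b : ℝ} (h : ∀ t ∈ Set.Icc (0:ℝ) 1, T.op (ν.toFun (f ⁻¹' Set.Icc t 1)) t ≤ b) :
    tInt T ν f ≤ b :=
  csSup_le (tInt_set_nonempty T ν f) (fun y ⟨t, ht, hy⟩ => hy ▸ h t ht)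

lemma tInt_mem : tInt T ν f ∈ Set.Icc (0:ℝ) 1 := by
  constructor
  · calc (0:ℝ) = T.op (ν.toFun (f ⁻¹' Set.Icc 0 1)) 0 := (T.op_zero (nu_mem ν _)).symm
      _ ≤ tInt T ν f := le_tInt' T ν f (by norm_num)
  · exact tInt_le T ν f (fun t ht => (T.mem' _ _ (nu_mem ν _) ht).2)

end tIntLemmas

section Backward
variable {X : Type*} [TopologicalSpace X] (T : Tnorm) (ν : Capacity X)

lemma tInt_one : tInt T ν (fun _ : X => (1:ℝ)) = 1 := by
  refine le_antisymm (tInt_mem T ν _).2 ?_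
  have h : ((fun _ : X => (1:ℝ)) ⁻¹' Set.Icc 1 1) = Set.univ := by
    ext x; simp
  calc (1:ℝ) = T.op (ν.toFun ((fun _ : X => (1:ℝ)) ⁻¹' Set.Icc 1 1)) 1 := by
        rw [h, ν.univ', T.one_id' 1 (by norm_num)]
    _ ≤ _ := le_tInt' T ν _ (by norm_num)

lemma tInt_mono {φ ψ : X → ℝ} (hψr : ∀ x, ψ x ∈ Set.Icc (0:ℝ) 1)
    (h : ∀ x, φ x ≤ ψ x) : tInt T ν φ ≤ tInt T ν ψ := by
  refine tInt_le T ν φ (fun t ht => ?_)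
  calc T.op (ν.toFun (φ ⁻¹' Set.Icc t 1)) t
      ≤ T.op (ν.toFun (ψ ⁻¹' Set.Icc t 1)) t := by
        refine T.mono' _ _ _ _ (ν.mono' _ _ fun x hx => ?_) le_rfl
        exact ⟨le_trans hx.1 (h x), (hψr x).2⟩
    _ ≤ tInt T ν ψ := le_tInt' T ν ψ ht

lemma tInt_max {φ ψ : X → ℝ} (hφr : ∀ x, φ x ∈ Set.Icc (0:ℝ) 1)
    (hψr : ∀ x, ψ x ∈ Set.Icc (0:ℝ) 1) (hco : Comonotone φ ψ) :
    tInt T ν (fun x => max (φ x) (ψ x)) = max (tInt T ν φ) (tInt T ν ψ) := by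
  have key : ∀ t ∈ Set.Icc (0:ℝ) 1,
      T.op (ν.toFun ((fun x => max (φ x) (ψ x)) ⁻¹' Set.Icc t 1)) t
        = max (T.op (ν.toFun (φ ⁻¹' Set.Icc t 1)) t) (T.op (ν.toFun (ψ ⁻¹' Set.Icc t 1)) t) := by
    intro t _
    have hun : ((fun x => max (φ x) (ψ x)) ⁻¹' Set.Icc t 1)
        = (φ ⁻¹' Set.Icc t 1) ∪ (ψ ⁻¹' Set.Icc t 1) := by
      ext x
      simp only [Set.mem_preimage, Set.mem_Icc, Set.mem_union, le_max_iff, max_le_iff]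
      constructor
      · rintro ⟨h1 | h1, _, _⟩
        · exact Or.inl ⟨h1, (hφr x).2⟩
        · exact Or.inr ⟨h1, (hψr x).2⟩
      · rintro (⟨h1, _⟩ | ⟨h1, _⟩)
        · exact ⟨Or.inl h1, (hφr x).2, (hψr x).2⟩
        · exact ⟨Or.inr h1, (hφr x).2, (hψr x).2⟩
    have hsub : (φ ⁻¹' Set.Icc t 1) ⊆ (ψ ⁻¹' Set.Icc t 1)
        ∨ (ψ ⁻¹' Set.Icc t 1) ⊆ (φ ⁻¹' Set.Icc t 1) := by
      by_contra hc
      push_neg at hc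
      obtain ⟨x₁, hx₁, hx₁'⟩ := Set.not_subset.mp hc.1
      obtain ⟨x₂, hx₂, hx₂'⟩ := Set.not_subset.mp hc.2
      simp only [Set.mem_preimage, Set.mem_Icc] at hx₁ hx₂
      have h1 : ψ x₁ < t := by
        by_contra h
        push_neg at h
        exact hx₁' ⟨h, (hψr x₁).2⟩
      have h2 : φ x₂ < t := by
        by_contra h
        push_neg at h
        exact hx₂' ⟨h, (hφr x₂).2⟩
      have := hco x₁ x₂
      nlinarith [hx₁.1, hx₂.1]
    rw [hun]
    rcases hsub with hsub | hsub
    · rw [Set.union_eq_self_of_subset_left hsub,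
        max_eq_right (T.mono' _ _ _ _ (ν.mono' _ _ hsub) le_rfl)]
    · rw [Set.union_eq_self_of_subset_right hsub,
        max_eq_left (T.mono' _ _ _ _ (ν.mono' _ _ hsub) le_rfl)]
  refine le_antisymm ?_ ?_
  · refine tInt_le T ν _ (fun t ht => ?_)
    rw [key t ht]
    exact max_le_max (le_tInt' T ν φ ht) (le_tInt' T ν ψ ht)
  · refine max_le (tInt_le T ν φ fun t ht => ?_) (tInt_le T ν ψ fun t ht => ?_)
    · calc T.op (ν.toFun (φ ⁻¹' Set.Icc t 1)) t
          ≤ max (T.op (ν.toFun (φ ⁻¹' Set.Icc t 1)) t) (T.op (ν.toFun (ψ ⁻¹' Set.Icc t 1)) t) :=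
            le_max_left _ _
        _ = _ := (key t ht).symm
        _ ≤ _ := le_tInt' T ν _ ht
    · calc T.op (ν.toFun (ψ ⁻¹' Set.Icc t 1)) t
          ≤ max (T.op (ν.toFun (φ ⁻¹' Set.Icc t 1)) t) (T.op (ν.toFun (ψ ⁻¹' Set.Icc t 1)) t) :=
            le_max_right _ _
        _ = _ := (key t ht).symm
        _ ≤ _ := le_tInt' T ν _ ht

lemma Tnorm.op_rot (T : Tnorm) (a c s : ℝ) : T.op a (T.op c s) = T.op c (T.op a s) := by
  rw [← T.assoc', T.comm' a c, T.assoc']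

lemma tInt_hom {φ : X → ℝ} (hφr : ∀ x, φ x ∈ Set.Icc (0:ℝ) 1)
    {c : ℝ} (hc : c ∈ Set.Icc (0:ℝ) 1) :
    tInt T ν (fun x => T.op c (φ x)) = T.op c (tInt T ν φ) := by
  refine le_antisymm ?_ ?_
  · refine tInt_le T ν _ (fun t ht => ?_)
    rcases eq_or_lt_of_le ht.1 with rfl | htpos
    · rw [T.op_zero (nu_mem ν _)]
      exact (T.mem' _ _ hc (tInt_mem T ν φ)).1
    · set S : Set ℝ := {s ∈ Set.Icc (0:ℝ) 1 | t ≤ T.op c s} with hS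
      rcases S.eq_empty_or_nonempty with hSe | hSne
      · -- then c < t and the level set is empty
        have h1 : (1:ℝ) ∉ S := hSe ▸ Set.notMem_empty 1
        have hct : T.op c 1 < t := by
          by_contra h
          push_neg at h
          exact h1 ⟨⟨by norm_num, le_rfl⟩, h⟩
        have hempty : ((fun x => T.op c (φ x)) ⁻¹' Set.Icc t 1) = ∅ := by
          ext x
          simp only [Set.mem_preimage, Set.mem_Icc, Set.mem_empty_iff_false, iff_false, not_and,
            not_le]
          intro hx
          exact absurd hx (not_le.mpr (lt_of_le_of_lt
            (T.mono' c c (φ x) 1 le_rfl (hφr x).2) hct))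
        rw [hempty, ν.empty', T.zero_op ht]
        exact (T.mem' _ _ hc (tInt_mem T ν φ)).1
      · have hScl : IsClosed S := by
          have : S = Set.Icc (0:ℝ) 1 ∩ {s | t ≤ T.op c s} := rfl
          rw [this]
          exact isClosed_Icc.inter (isClosed_le continuous_const
            (T.cont'.comp (continuous_const.prodMk continuous_id)))
        have hSbdd : BddBelow S := ⟨0, fun s hs => hs.1.1⟩
        have hs₀mem : sInf S ∈ S := hScl.csInf_mem hSne hSbdd
        set s₀ := sInf S
        have hs₀Icc : s₀ ∈ Set.Icc (0:ℝ) 1 := hs₀mem.1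
        have hts₀ : t ≤ T.op c s₀ := hs₀mem.2
        have hsub : ((fun x => T.op c (φ x)) ⁻¹' Set.Icc t 1) ⊆ φ ⁻¹' Set.Icc s₀ 1 := by
          intro x hx
          refine ⟨csInf_le hSbdd ⟨hφr x, hx.1⟩, (hφr x).2⟩
        calc T.op (ν.toFun ((fun x => T.op c (φ x)) ⁻¹' Set.Icc t 1)) t
            ≤ T.op (ν.toFun (φ ⁻¹' Set.Icc s₀ 1)) (T.op c s₀) :=
              T.mono' _ _ _ _ (ν.mono' _ _ hsub) hts₀
          _ = T.op c (T.op (ν.toFun (φ ⁻¹' Set.Icc s₀ 1)) s₀) := by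
              rw [← T.assoc', T.comm' _ c, T.assoc']
          _ ≤ T.op c (tInt T ν φ) :=
              T.mono' _ _ _ _ le_rfl (le_tInt' T ν φ hs₀Icc)
  · have hmap : T.op c (tInt T ν φ) = sSup ((fun y => T.op c y) ''
        ((fun t : ℝ => T.op (ν.toFun (φ ⁻¹' Set.Icc t 1)) t) '' Set.Icc (0:ℝ) 1)) := by
      refine Monotone.map_csSup_of_continuousAt ?_ ?_ (tInt_set_nonempty T ν φ)
        (tInt_set_bddAbove T ν φ)
      · exact (T.cont'.comp (continuous_const.prodMk continuous_id)).continuousAt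
      · exact fun a b hab => T.mono' c c a b le_rfl hab
    rw [hmap]
    refine csSup_le ((tInt_set_nonempty T ν φ).image _) ?_
    rintro y ⟨z, ⟨s, hs, rfl⟩, rfl⟩
    have hcs : T.op c s ∈ Set.Icc (0:ℝ) 1 := T.mem' _ _ hc hs
    calc T.op c (T.op (ν.toFun (φ ⁻¹' Set.Icc s 1)) s)
        = T.op (ν.toFun (φ ⁻¹' Set.Icc s 1)) (T.op c s) := by
          rw [← T.assoc', T.comm' c, T.assoc']
      _ ≤ T.op (ν.toFun ((fun x => T.op c (φ x)) ⁻¹' Set.Icc (T.op c s) 1)) (T.op c s) := by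
          refine T.mono' _ _ _ _ (ν.mono' _ _ fun x hx => ?_) le_rfl
          exact ⟨T.mono' c c s (φ x) le_rfl hx.1, (T.mem' _ _ hc (hφr x)).2⟩
      _ ≤ tInt T ν (fun x => T.op c (φ x)) := le_tInt' T ν _ hcs

end Backward

/-- clamp to `[0,1]` -/
noncomputable def rclamp (r : ℝ) : ℝ := max 0 (min 1 r)

lemma rclamp_mem (r : ℝ) : rclamp r ∈ Set.Icc (0:ℝ) 1 :=
  ⟨le_max_left _ _, max_le (by norm_num) (min_le_left _ _)⟩
lemma rclamp_mono : Monotone rclamp :=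
  fun a b hab => max_le_max le_rfl (min_le_min le_rfl hab)
lemma rclamp_cont : Continuous rclamp :=
  continuous_const.max (continuous_const.min continuous_id)
lemma rclamp_eq_one {r : ℝ} (h : 1 ≤ r) : rclamp r = 1 := by
  rw [rclamp, min_eq_left h, max_eq_right (by norm_num : (0:ℝ) ≤ 1)]
lemma rclamp_pos {r : ℝ} (h : rclamp r ≠ 0) : 0 < r := by
  by_contra hr
  push_neg at hr
  exact h (by rw [rclamp, min_eq_right (le_trans hr (by norm_num)), max_eq_left hr])

/-- iterated pointwise max of a family of functions -/
noncomputable def iterMax (f : ℕ → ℝ → ℝ) : ℕ → ℝ → ℝ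
  | 0 => f 0
  | (k+1) => fun s => max (iterMax f k s) (f (k+1) s)

lemma iterMax_mono {f : ℕ → ℝ → ℝ} (hf : ∀ i, Monotone (f i)) (k : ℕ) :
    Monotone (iterMax f k) := by
  induction k with
  | zero => exact hf 0
  | succ k ih => exact fun a b hab => max_le_max (ih hab) (hf (k+1) hab)

lemma iterMax_cont {f : ℕ → ℝ → ℝ} (hf : ∀ i, Continuous (f i)) (k : ℕ) :
    Continuous (iterMax f k) := by
  induction k with
  | zero => exact hf 0
  | succ k ih => exact ih.max (hf (k+1))

lemma iterMax_mem {f : ℕ → ℝ → ℝ} (hf : ∀ i s, f i s ∈ Set.Icc (0:ℝ) 1) (k : ℕ) (s : ℝ) :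
    iterMax f k s ∈ Set.Icc (0:ℝ) 1 := by
  induction k with
  | zero => exact hf 0 s
  | succ k ih => exact ⟨le_max_of_le_left ih.1, max_le ih.2 (hf (k+1) s).2⟩

lemma le_iterMax {f : ℕ → ℝ → ℝ} (k : ℕ) {i : ℕ} (hi : i ≤ k) (s : ℝ) :
    f i s ≤ iterMax f k s := by
  induction k with
  | zero => simp_all [iterMax]
  | succ k ih =>
    rcases Nat.lt_or_ge i (k+1) with h | h
    · exact le_max_of_le_left (ih (Nat.lt_succ_iff.mp h))
    · have : i = k + 1 := le_antisymm hi h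
      subst this
      exact le_max_right _ _

lemma mul_nonneg_of_nonpos_nonpos' {a b : ℝ} (ha : a ≤ 0) (hb : b ≤ 0) : 0 ≤ a * b := by
  nlinarith

lemma comono_comp {X : Type*} (u v : ℝ → ℝ) (hu : Monotone u) (hv : Monotone v) (φ : X → ℝ) :
    Comonotone (fun x => u (φ x)) (fun x => v (φ x)) := by
  intro x₁ x₂
  rcases le_total (φ x₁) (φ x₂) with h | h
  · exact mul_nonneg_of_nonpos_nonpos' (by linarith [hu h]) (by linarith [hv h])
  · exact mul_nonneg (by linarith [hu h]) (by linarith [hv h])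

section Forward
variable {X : Type*} [TopologicalSpace X] [CompactSpace X] [T2Space X] {μ : (X → ℝ) → ℝ}
variable (hmono : ∀ φ ψ : X → ℝ, Continuous φ → Continuous ψ →
        (∀ x, φ x ∈ Set.Icc (0:ℝ) 1) → (∀ x, ψ x ∈ Set.Icc (0:ℝ) 1) →
        (∀ x, φ x ≤ ψ x) → μ φ ≤ μ ψ)
  (hone : μ (fun _ => 1) = 1)
  (T : Tnorm)
  (hmax : ∀ φ ψ : X → ℝ, Continuous φ → Continuous ψ →
        (∀ x, φ x ∈ Set.Icc (0:ℝ) 1) → (∀ x, ψ x ∈ Set.Icc (0:ℝ) 1) →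
        Comonotone φ ψ → μ (fun x => max (φ x) (ψ x)) = max (μ φ) (μ ψ))
  (hhom : ∀ c ∈ Set.Icc (0:ℝ) 1, ∀ φ : X → ℝ, Continuous φ → (∀ x, φ x ∈ Set.Icc (0:ℝ) 1) →
        μ (fun x => T.op c (φ x)) = T.op c (μ φ))

include hmax in
lemma mu_iterMax_le {f : ℕ → ℝ → ℝ} (hfm : ∀ i, Monotone (f i)) (hfc : ∀ i, Continuous (f i))
    (hfr : ∀ i s, f i s ∈ Set.Icc (0:ℝ) 1) {φ : X → ℝ} (hφc : Continuous φ)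
    (hφr : ∀ x, φ x ∈ Set.Icc (0:ℝ) 1) {b : ℝ} (k : ℕ)
    (hb : ∀ i ≤ k, μ (fun x => f i (φ x)) ≤ b) :
    μ (fun x => iterMax f k (φ x)) ≤ b := by
  induction k with
  | zero => exact hb 0 le_rfl
  | succ k ih =>
    have heq : μ (fun x => iterMax f (k+1) (φ x))
        = max (μ (fun x => iterMax f k (φ x))) (μ (fun x => f (k+1) (φ x))) := by
      have := hmax (fun x => iterMax f k (φ x)) (fun x => f (k+1) (φ x))
        ((iterMax_cont hfc k).comp hφc) ((hfc (k+1)).comp hφc)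
        (fun x => iterMax_mem hfr k (φ x)) (fun x => hfr (k+1) (φ x))
        (comono_comp _ _ (iterMax_mono hfm k) (hfm (k+1)) φ)
      exact this
    rw [heq]
    exact max_le (ih (fun i hi => hb i (Nat.le_succ_of_le hi))) (hb (k+1) le_rfl)
end Forward

lemma rclamp_of_mem {r : ℝ} (h : r ∈ Set.Icc (0:ℝ) 1) : rclamp r = r := by
  rw [rclamp, min_eq_right h.2, max_eq_right h.1]

section Forward2
variable {X : Type*} [TopologicalSpace X] [CompactSpace X] [T2Space X] {μ : (X → ℝ) → ℝ}
variable (hmono : ∀ φ ψ : X → ℝ, Continuous φ → Continuous ψ →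
        (∀ x, φ x ∈ Set.Icc (0:ℝ) 1) → (∀ x, ψ x ∈ Set.Icc (0:ℝ) 1) →
        (∀ x, φ x ≤ ψ x) → μ φ ≤ μ ψ)
  (hone : μ (fun _ => 1) = 1)
  (T : Tnorm)
  (hmax : ∀ φ ψ : X → ℝ, Continuous φ → Continuous ψ →
        (∀ x, φ x ∈ Set.Icc (0:ℝ) 1) → (∀ x, ψ x ∈ Set.Icc (0:ℝ) 1) →
        Comonotone φ ψ → μ (fun x => max (φ x) (ψ x)) = max (μ φ) (μ ψ))
  (hhom : ∀ c ∈ Set.Icc (0:ℝ) 1, ∀ φ : X → ℝ, Continuous φ → (∀ x, φ x ∈ Set.Icc (0:ℝ) 1) →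
        μ (fun x => T.op c (φ x)) = T.op c (μ φ))

include hmono hone hhom in
lemma partA {φ : X → ℝ} (hφc : Continuous φ) (hφr : ∀ x, φ x ∈ Set.Icc (0:ℝ) 1)
    {t : ℝ} (ht : t ∈ Set.Icc (0:ℝ) 1) :
    T.op (nuF μ (φ ⁻¹' Set.Icc t 1)) t ≤ μ φ := by
  rcases eq_or_lt_of_le ht.1 with rfl | htpos
  · rw [T.op_zero (nuF_mem hmono hone T hhom _)]
    exact (mu_mem hmono hone T hhom hφc hφr).1
  · refine le_of_forall_pos_le_add fun ε hε => ?_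
    obtain ⟨δ', hδ', hu⟩ := T.unif ε hε
    set t' : ℝ := t - min (δ'/2) (t/2) with ht'
    have hmin : 0 < min (δ'/2) (t/2) := lt_min (by linarith) (by linarith)
    have h1 : 0 < t' := by
      have : min (δ'/2) (t/2) ≤ t/2 := min_le_right _ _
      simp only [ht']; linarith
    have h2 : t' < t := by simp only [ht']; linarith
    have h3 : t - t' < δ' := by
      have : min (δ'/2) (t/2) ≤ δ'/2 := min_le_left _ _
      simp only [ht']; linarith
    have ht'Icc : t' ∈ Set.Icc (0:ℝ) 1 := ⟨h1.le, le_trans h2.le ht.2⟩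
    set ψ : X → ℝ := fun x => rclamp ((φ x - t') / (t - t')) with hψ
    have hψc : Continuous ψ := rclamp_cont.comp ((hφc.sub continuous_const).div_const _)
    have hψr : ∀ x, ψ x ∈ Set.Icc (0:ℝ) 1 := fun x => rclamp_mem _
    have hcand : IsCand (φ ⁻¹' Set.Icc t 1) ψ := by
      refine ⟨hψc, hψr, fun x hx => ?_⟩
      refine rclamp_eq_one ((le_div_iff₀ (by linarith)).mpr ?_)
      have : t ≤ φ x := hx.1
      linarith
    have hle : ∀ x, T.op t' (ψ x) ≤ φ x := by
      intro x
      by_cases hx : ψ x = 0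
      · rw [hx, T.op_zero ht'Icc]; exact (hφr x).1
      · have hpos : 0 < (φ x - t') / (t - t') := rclamp_pos hx
        have : 0 < φ x - t' := by
          by_contra hcon
          push_neg at hcon
          have := div_nonpos_of_nonpos_of_nonneg hcon (by linarith : (0:ℝ) ≤ t - t')
          linarith
        calc T.op t' (ψ x) ≤ t' := T.op_le_left ht'Icc (hψr x)
          _ ≤ φ x := by linarith
    have hkey : T.op t' (nuF μ (φ ⁻¹' Set.Icc t 1)) ≤ μ φ := by
      calc T.op t' (nuF μ (φ ⁻¹' Set.Icc t 1)) ≤ T.op t' (μ ψ) :=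
            T.mono' _ _ _ _ le_rfl (nuF_le hmono hone T hhom hcand)
        _ = μ (fun x => T.op t' (ψ x)) := (hhom t' ht'Icc ψ hψc hψr).symm
        _ ≤ μ φ := hmono _ _ (T.cont'.comp (continuous_const.prodMk hψc)) hφc
            (fun x => T.mem' _ _ ht'Icc (hψr x)) hφr hle
    have hnm := nuF_mem hmono hone T hhom (φ ⁻¹' Set.Icc t 1)
    have hclose : |T.op (nuF μ (φ ⁻¹' Set.Icc t 1)) t - T.op (nuF μ (φ ⁻¹' Set.Icc t 1)) t'| < ε :=
      hu _ hnm t ht _ hnm t' ht'Icc (by simp [hδ']) (by rw [abs_of_nonneg (by linarith)]; linarith)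
    rw [T.comm' t' _] at hkey
    have := abs_lt.mp hclose
    linarith

/-- The capacity induced by the functional `μ`. -/
noncomputable def nuCap : Capacity X where
  toFun := nuF μ
  nonneg' := fun A => (nuF_mem hmono hone T hhom A).1
  le_one' := fun A => (nuF_mem hmono hone T hhom A).2
  empty' := nuF_empty hmono hone T hhom
  univ' := nuF_univ hmono hone T hhom
  mono' := fun _ _ h => nuF_mono hmono hone T hhom h
  usc' := fun _ hF _ ha => nuF_usc hmono hone T hhom hF ha

lemma nuCap_toFun : (nuCap hmono hone T hhom).toFun = nuF μ := rfl

end Forward2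

section Forward3
variable {X : Type*} [TopologicalSpace X] [CompactSpace X] [T2Space X] {μ : (X → ℝ) → ℝ}
variable (hmono : ∀ φ ψ : X → ℝ, Continuous φ → Continuous ψ →
        (∀ x, φ x ∈ Set.Icc (0:ℝ) 1) → (∀ x, ψ x ∈ Set.Icc (0:ℝ) 1) →
        (∀ x, φ x ≤ ψ x) → μ φ ≤ μ ψ)
  (hone : μ (fun _ => 1) = 1)
  (T : Tnorm)
  (hmax : ∀ φ ψ : X → ℝ, Continuous φ → Continuous ψ →
        (∀ x, φ x ∈ Set.Icc (0:ℝ) 1) → (∀ x, ψ x ∈ Set.Icc (0:ℝ) 1) →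
        Comonotone φ ψ → μ (fun x => max (φ x) (ψ x)) = max (μ φ) (μ ψ))
  (hhom : ∀ c ∈ Set.Icc (0:ℝ) 1, ∀ φ : X → ℝ, Continuous φ → (∀ x, φ x ∈ Set.Icc (0:ℝ) 1) →
        μ (fun x => T.op c (φ x)) = T.op c (μ φ))

include hmono hone hmax hhom in
lemma mu_le_tInt {φ : X → ℝ} (hφc : Continuous φ) (hφr : ∀ x, φ x ∈ Set.Icc (0:ℝ) 1) :
    μ φ ≤ tInt T (nuCap hmono hone T hhom) φ := by
  set ν := nuCap hmono hone T hhom with hν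
  refine le_of_forall_pos_le_add fun ε hε => ?_
  obtain ⟨δ', hδ', hu⟩ := T.unif ε hε
  obtain ⟨n, hn⟩ := exists_nat_gt (max 1 (2/δ'))
  have hn1 : (1:ℝ) < n := lt_of_le_of_lt (le_max_left _ _) hn
  have hn0 : (0:ℝ) < n := by linarith
  have hn1' : 1 ≤ n := by exact_mod_cast hn1.le
  have h2n : 2/(n:ℝ) < δ' := by
    rw [div_lt_iff₀ hn0]
    have h := lt_of_le_of_lt (le_max_right 1 (2/δ')) hn
    rw [div_lt_iff₀ hδ'] at h
    nlinarith
  set f : ℕ → ℝ → ℝ :=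
    fun i s => T.op (rclamp (((i:ℝ)+1)/n)) (rclamp ((n:ℝ)*s - i + 1)) with hf
  have hfm : ∀ i, Monotone (f i) := by
    intro i a b hab
    refine T.mono' _ _ _ _ le_rfl (rclamp_mono ?_)
    nlinarith
  have hfc : ∀ i, Continuous (f i) := by
    intro i
    refine T.cont'.comp (continuous_const.prodMk (rclamp_cont.comp ?_))
    exact ((continuous_const.mul continuous_id).sub continuous_const).add continuous_const
  have hfr : ∀ i s, f i s ∈ Set.Icc (0:ℝ) 1 :=
    fun i s => T.mem' _ _ (rclamp_mem _) (rclamp_mem _)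
  -- the bound on each level
  have hb : ∀ i ≤ n - 1, μ (fun x => f i (φ x)) ≤ tInt T ν φ + ε := by
    intro i hi
    have hin : (i:ℝ) + 1 ≤ n := by
      have : i + 1 ≤ n := by omega
      exact_mod_cast this
    have hhi : ((i:ℝ)+1)/n ∈ Set.Icc (0:ℝ) 1 := ⟨by positivity, (div_le_one hn0).mpr hin⟩
    have hcl : rclamp (((i:ℝ)+1)/n) = ((i:ℝ)+1)/n := rclamp_of_mem hhi
    set tlo : ℝ := max 0 (((i:ℝ)-1)/n) with htlodef
    have htlo : tlo ∈ Set.Icc (0:ℝ) 1 := by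
      refine ⟨le_max_left _ _, max_le (by norm_num) ((div_le_one hn0).mpr (by linarith))⟩
    set g : X → ℝ := fun x => rclamp ((n:ℝ)*φ x - i + 1) with hg
    have hgc : Continuous g := rclamp_cont.comp
      (((continuous_const.mul hφc).sub continuous_const).add continuous_const)
    have hgr : ∀ x, g x ∈ Set.Icc (0:ℝ) 1 := fun x => rclamp_mem _
    have hgle : μ g ≤ nuF μ (φ ⁻¹' Set.Icc tlo 1) := by
      refine mu_le_nuF hmono hgc hgr (fun x hx => ?_)
      have hpos : 0 < (n:ℝ)*φ x - i + 1 := rclamp_pos hx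
      have hlt : ((i:ℝ)-1)/n < φ x := by
        rw [div_lt_iff₀ hn0]
        nlinarith
      exact ⟨max_le (hφr x).1 hlt.le, (hφr x).2⟩
    have hgap : |((i:ℝ)+1)/n - tlo| < δ' := by
      have hle1 : tlo ≤ ((i:ℝ)+1)/n := by
        refine max_le (by positivity) ?_
        rw [div_le_div_iff₀ hn0 hn0]
        nlinarith

      have hle2 : ((i:ℝ)+1)/n - tlo ≤ 2/n := by
        have : ((i:ℝ)-1)/n ≤ tlo := le_max_right _ _
        have heq : ((i:ℝ)+1)/n - ((i:ℝ)-1)/n = 2/n := by ring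
        linarith
      rw [abs_of_nonneg (by linarith)]
      linarith
    have hnuB := nuF_mem hmono hone T hhom (φ ⁻¹' Set.Icc tlo 1)
    have hclose : |T.op (((i:ℝ)+1)/n) (nuF μ (φ ⁻¹' Set.Icc tlo 1))
        - T.op tlo (nuF μ (φ ⁻¹' Set.Icc tlo 1))| < ε :=
      hu _ hhi _ hnuB _ htlo _ hnuB hgap (by simp [hδ'])
    have habs := abs_lt.mp hclose
    calc μ (fun x => f i (φ x)) = μ (fun x => T.op (((i:ℝ)+1)/n) (g x)) := by
          simp only [hf, hcl, hg]
      _ = T.op (((i:ℝ)+1)/n) (μ g) := hhom _ hhi g hgc hgr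
      _ ≤ T.op (((i:ℝ)+1)/n) (nuF μ (φ ⁻¹' Set.Icc tlo 1)) := T.mono' _ _ _ _ le_rfl hgle
      _ ≤ T.op tlo (nuF μ (φ ⁻¹' Set.Icc tlo 1)) + ε := by linarith
      _ = T.op (ν.toFun (φ ⁻¹' Set.Icc tlo 1)) tlo + ε := by rw [T.comm', hν, nuCap_toFun]
      _ ≤ tInt T ν φ + ε := by linarith [le_tInt' T ν φ htlo]
  -- pointwise domination
  have hpt : ∀ x, φ x ≤ iterMax f (n-1) (φ x) := by
    intro x
    set m : ℕ := ⌈(n:ℝ) * φ x⌉₊ with hm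
    set i : ℕ := m - 1 with hidef
    have hmn : m ≤ n := Nat.ceil_le.mpr (by nlinarith [(hφr x).2])
    have him : i ≤ n - 1 := by omega
    have h1 : (i:ℝ) ≤ (n:ℝ) * φ x := by
      rcases Nat.eq_zero_or_pos m with hm0 | hmpos
      · have : i = 0 := by omega
        rw [this]
        push_cast
        nlinarith [(hφr x).1]
      · have hceil : ((m:ℝ)) < (n:ℝ) * φ x + 1 :=
          Nat.ceil_lt_add_one (by nlinarith [(hφr x).1])
        have hcast : (i:ℝ) = (m:ℝ) - 1 := by
          rw [hidef]
          push_cast [hmpos]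
          ring
        linarith
    have h2 : (n:ℝ) * φ x ≤ (i:ℝ) + 1 := by
      rcases Nat.eq_zero_or_pos m with hm0 | hmpos
      · have hle0 : (n:ℝ) * φ x ≤ 0 := by
          by_contra hcon
          push_neg at hcon
          have := Nat.ceil_pos.mpr hcon
          omega
        have : (0:ℝ) ≤ (i:ℝ) + 1 := by positivity
        linarith
      · have hcast : (i:ℝ) = (m:ℝ) - 1 := by
          rw [hidef]
          push_cast [hmpos]
          ring
        have := Nat.le_ceil ((n:ℝ) * φ x)
        rw [← hm] at this
        linarith
    have hin : (i:ℝ) + 1 ≤ n := by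
      have : i + 1 ≤ n := by omega
      exact_mod_cast this
    have hfi : φ x ≤ f i (φ x) := by
      have hr1 : rclamp ((n:ℝ)*φ x - i + 1) = 1 := rclamp_eq_one (by linarith)
      have hr2 : rclamp (((i:ℝ)+1)/n) = ((i:ℝ)+1)/n :=
        rclamp_of_mem ⟨by positivity, (div_le_one hn0).mpr hin⟩
      have : f i (φ x) = ((i:ℝ)+1)/n := by
        rw [hf]
        simp only [hr1, hr2]
        exact T.one_id' _ ⟨by positivity, (div_le_one hn0).mpr hin⟩
      rw [this, le_div_iff₀ hn0]
      nlinarith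
    exact le_trans hfi (le_iterMax (n-1) him _)
  calc μ φ ≤ μ (fun x => iterMax f (n-1) (φ x)) :=
        hmono _ _ hφc ((iterMax_cont hfc (n-1)).comp hφc) hφr
          (fun x => iterMax_mem hfr (n-1) (φ x)) hpt
    _ ≤ tInt T ν φ + ε := mu_iterMax_le hmax hfm hfc hfr hφc hφr (n-1) hb

include hmono hone hmax hhom in
lemma mu_eq_tInt {φ : X → ℝ} (hφc : Continuous φ) (hφr : ∀ x, φ x ∈ Set.Icc (0:ℝ) 1) :
    μ φ = tInt T (nuCap hmono hone T hhom) φ := by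
  refine le_antisymm (mu_le_tInt hmono hone T hmax hhom hφc hφr) ?_
  refine tInt_le T _ φ (fun t ht => ?_)
  exact partA hmono hone T hhom hφc hφr ht

end Forward3

section Unique
variable {X : Type*} [TopologicalSpace X] [CompactSpace X] [T2Space X] {μ : (X → ℝ) → ℝ}
variable (hmono : ∀ φ ψ : X → ℝ, Continuous φ → Continuous ψ →
        (∀ x, φ x ∈ Set.Icc (0:ℝ) 1) → (∀ x, ψ x ∈ Set.Icc (0:ℝ) 1) →
        (∀ x, φ x ≤ ψ x) → μ φ ≤ μ ψ)
  (hone : μ (fun _ => 1) = 1)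
  (T : Tnorm)
  (hhom : ∀ c ∈ Set.Icc (0:ℝ) 1, ∀ φ : X → ℝ, Continuous φ → (∀ x, φ x ∈ Set.Icc (0:ℝ) 1) →
        μ (fun x => T.op c (φ x)) = T.op c (μ φ))

include hmono hone hhom in
lemma nuF_unique (ν' : Capacity X)
    (hrep : ∀ φ : X → ℝ, Continuous φ → (∀ x, φ x ∈ Set.Icc (0:ℝ) 1) → μ φ = tInt T ν' φ)
    {F : Set X} (hF : IsClosed F) : ν'.toFun F = nuF μ F := by
  refine le_antisymm ?_ ?_
  · refine le_nuF fun φ hφ => ?_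
    calc ν'.toFun F ≤ ν'.toFun (φ ⁻¹' Set.Icc 1 1) := by
          refine ν'.mono' _ _ fun x hx => ?_
          have := hφ.2.2 x hx
          exact ⟨this.ge, this.le⟩
      _ = T.op (ν'.toFun (φ ⁻¹' Set.Icc 1 1)) 1 := (T.one_id' _ (nu_mem ν' _)).symm
      _ ≤ tInt T ν' φ := le_tInt' T ν' φ (by norm_num)
      _ = μ φ := (hrep φ hφ.1 hφ.2.1).symm
  · by_contra hcon
    push_neg at hcon
    set a : ℝ := (ν'.toFun F + nuF μ F)/2 with ha
    have ha1 : ν'.toFun F < a := by simp only [ha]; linarith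
    have ha2 : a < nuF μ F := by simp only [ha]; linarith
    have ha0 : 0 ≤ a := by
      have := ν'.nonneg' F
      have := nuF_mem hmono hone T hhom F
      simp only [ha]; linarith [this.1]
    have ha3 : a ≤ 1 := le_trans ha2.le (nuF_mem hmono hone T hhom F).2
    obtain ⟨O, hOopen, hFO, hOa⟩ := ν'.usc' F hF a ha1
    obtain ⟨ψ, hψ0, hψ1, hψm⟩ := exists_continuous_zero_one_of_isClosed
      hOopen.isClosed_compl hF (by rwa [Set.disjoint_compl_left_iff_subset])
    have hψr : ∀ x, ψ x ∈ Set.Icc (0:ℝ) 1 := hψm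
    have hnle : nuF μ F ≤ μ ψ :=
      nuF_le hmono hone T hhom ⟨ψ.continuous, hψr, fun x hx => hψ1 hx⟩
    have htle : tInt T ν' ψ ≤ a := by
      refine tInt_le T ν' ψ fun t ht => ?_
      rcases eq_or_lt_of_le ht.1 with rfl | htpos
      · rw [T.op_zero (nu_mem ν' _)]
        exact ha0
      · have hsub : (ψ ⁻¹' Set.Icc t 1) ⊆ O := by
          intro x hx
          by_contra hxO
          have h0 : ψ x = 0 := hψ0 hxO
          have hx1 : t ≤ ψ x := hx.1
          rw [h0] at hx1
          exact absurd hx1 (not_le.mpr htpos)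
        have hcomp : IsCompact (ψ ⁻¹' Set.Icc t 1) :=
          (isClosed_Icc.preimage ψ.continuous).isCompact
        have hlta : ν'.toFun (ψ ⁻¹' Set.Icc t 1) < a := hOa _ hsub hcomp
        calc T.op (ν'.toFun (ψ ⁻¹' Set.Icc t 1)) t ≤ T.op a 1 :=
              T.mono' _ _ _ _ hlta.le ht.2
          _ = a := T.one_id' a ⟨ha0, ha3⟩
    have := hrep ψ ψ.continuous hψr
    linarith

end Unique


/-- Representation theorem: a functional on `C(X,[0,1])` satisfies normalization, monotonicity,
comonotone maxitivity and t-norm homogeneity iff it is the t-normed integral with respect to a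
capacity, which is then unique (on closed sets). -/
theorem tInt_representation {X : Type*} [TopologicalSpace X] [CompactSpace X] [T2Space X]
    (T : Tnorm) (μ : (X → ℝ) → ℝ) :
    ((μ (fun _ => 1) = 1) ∧
     (∀ φ ψ : X → ℝ, Continuous φ → Continuous ψ →
        (∀ x, φ x ∈ Set.Icc (0:ℝ) 1) → (∀ x, ψ x ∈ Set.Icc (0:ℝ) 1) →
        (∀ x, φ x ≤ ψ x) → μ φ ≤ μ ψ) ∧
     (∀ φ ψ : X → ℝ, Continuous φ → Continuous ψ →
        (∀ x, φ x ∈ Set.Icc (0:ℝ) 1) → (∀ x, ψ x ∈ Set.Icc (0:ℝ) 1) →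
        Comonotone φ ψ → μ (fun x => max (φ x) (ψ x)) = max (μ φ) (μ ψ)) ∧
     (∀ c ∈ Set.Icc (0:ℝ) 1, ∀ φ : X → ℝ, Continuous φ → (∀ x, φ x ∈ Set.Icc (0:ℝ) 1) →
        μ (fun x => T.op c (φ x)) = T.op c (μ φ)))
    ↔
    (∃ ν : Capacity X,
      (∀ φ : X → ℝ, Continuous φ → (∀ x, φ x ∈ Set.Icc (0:ℝ) 1) → μ φ = tInt T ν φ) ∧
      (∀ ν' : Capacity X,
        (∀ φ : X → ℝ, Continuous φ → (∀ x, φ x ∈ Set.Icc (0:ℝ) 1) → μ φ = tInt T ν' φ) →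
        ∀ F : Set X, IsClosed F → ν'.toFun F = ν.toFun F)) := by
  constructor
  · rintro ⟨hone, hmono, hmax, hhom⟩
    refine ⟨nuCap hmono hone T hhom, fun φ hφc hφr => mu_eq_tInt hmono hone T hmax hhom hφc hφr,
      fun ν' hrep F hF => ?_⟩
    rw [nuCap_toFun]
    exact nuF_unique hmono hone T hhom ν' hrep hF
  · rintro ⟨ν, hrep, -⟩
    refine ⟨?_, ?_, ?_, ?_⟩
    · rw [hrep _ continuous_const (fun _ => by norm_num)]
      exact tInt_one T ν
    · intro φ ψ hφc hψc hφr hψr h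
      rw [hrep φ hφc hφr, hrep ψ hψc hψr]
      exact tInt_mono T ν hψr h
    · intro φ ψ hφc hψc hφr hψr hco
      rw [hrep _ (hφc.max hψc)
        (fun x => ⟨le_max_of_le_left (hφr x).1, max_le (hφr x).2 (hψr x).2⟩),
        hrep φ hφc hφr, hrep ψ hψc hψr]
      exact tInt_max T ν hφr hψr hco
    · intro c hc φ hφc hφr
      rw [hrep (fun x => T.op c (φ x)) (by exact T.cont'.comp (continuous_const.prodMk hφc))
        (fun x => T.mem' _ _ hc (hφr x)), hrep φ hφc hφr]
      exact tInt_hom T ν hφr hc
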